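/- The cascade generated by an invertible affine self-map φ(x) = Ax + b of 𝕋^d (with det A = ±1) is tame if and only if A^m = I for some positive integer m. -/

import Mathlib

open Filter Topology

noncomputable def affApply {d : ℕ} (A : Matrix (Fin d) (Fin d) ℤ)
    (b : Fin d → AddCircle (2 * Real.pi)) (x : Fin d → AddCircle (2 * Real.pi)) :
    Fin d → AddCircle (2 * Real.pi) :=
  fun i => (∑ j, A i j • x j) + b i


lemma step_ex {p : ℝ} (hp : 0 < p) (c : ℤ) (hc : c ≠ 0) (a L s : ℝ)
    (hs0 : 0 ≤ s) (hs : s ≤ p/2) (hL : 2*p ≤ |(c:ℝ)| * L) :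
    ∃ a', a ≤ a' ∧ a' + p/(4*|(c:ℝ)|) ≤ a + L ∧
      ∀ t, a' ≤ t → t ≤ a' + p/(4*|(c:ℝ)|) →
        ∃ N : ℤ, s ≤ (c:ℝ)*t - N*p ∧ (c:ℝ)*t - N*p ≤ s + p/4 := by
  have hcr : (c:ℝ) ≠ 0 := Int.cast_ne_zero.mpr hc
  rcases hcr.lt_or_gt with hneg | hpos
  · -- c < 0
    have habs : |(c:ℝ)| = -(c:ℝ) := abs_of_neg hneg
    rw [habs] at hL ⊢
    set N : ℤ := ⌈((c:ℝ)*(a+L) - s)/p⌉ with hN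
    have h1 : (c:ℝ)*(a+L) - s ≤ N*p := by
      have := Int.le_ceil (((c:ℝ)*(a+L) - s)/p)
      rw [div_le_iff₀ hp] at this; linarith
    have h2 : (N:ℝ)*p < (c:ℝ)*(a+L) - s + p := by
      have h := Int.ceil_lt_add_one (((c:ℝ)*(a+L) - s)/p)
      have hx : ((c:ℝ)*(a+L) - s)/p * p = (c:ℝ)*(a+L) - s := div_mul_cancel₀ _ hp.ne'
      nlinarith [h, hx, hp]
    have hca' : (c:ℝ) * ((N*p + s + p/4)/(c:ℝ)) = N*p + s + p/4 :=
      mul_div_cancel₀ _ hcr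
    have hsum : (c:ℝ) * ((N*p + s + p/4)/(c:ℝ) + p/(4*(-(c:ℝ)))) = N*p + s := by
      rw [mul_add, hca']
      field_simp
      ring
    refine ⟨(N*p + s + p/4)/(c:ℝ), ?_, ?_, ?_⟩
    · rw [le_div_iff_of_neg' hneg]
      nlinarith [hL, h2, hp]
    · rw [← mul_le_mul_left_of_neg (a := a + L) hneg, hsum]
      linarith
    · intro t ht1 ht2
      refine ⟨N, ?_, ?_⟩
      · have := (mul_le_mul_left_of_neg hneg).mpr ht2
        rw [hsum] at this
        linarith
      · have := (mul_le_mul_left_of_neg hneg).mpr ht1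
        rw [hca'] at this
        linarith
  · -- c > 0
    have habs : |(c:ℝ)| = (c:ℝ) := abs_of_pos hpos
    rw [habs] at hL ⊢
    set N : ℤ := ⌈((c:ℝ)*a - s)/p⌉ with hN
    have h1 : (c:ℝ)*a - s ≤ N*p := by
      have := Int.le_ceil (((c:ℝ)*a - s)/p)
      rw [div_le_iff₀ hp] at this; linarith
    have h2 : (N:ℝ)*p < (c:ℝ)*a - s + p := by
      have h := Int.ceil_lt_add_one (((c:ℝ)*a - s)/p)
      have hx : ((c:ℝ)*a - s)/p * p = (c:ℝ)*a - s := div_mul_cancel₀ _ hp.ne'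
      nlinarith [h, hx, hp]
    have hca' : (c:ℝ) * ((N*p + s)/(c:ℝ)) = N*p + s := mul_div_cancel₀ _ hcr
    have hsum : (c:ℝ) * ((N*p + s)/(c:ℝ) + p/(4*(c:ℝ))) = N*p + s + p/4 := by
      rw [mul_add, hca']
      field_simp
    refine ⟨(N*p + s)/(c:ℝ), ?_, ?_, ?_⟩
    · rw [le_div_iff₀' hpos]
      linarith
    · rw [← mul_le_mul_iff_right₀ hpos, hsum]
      nlinarith [hL, h2, hp]
    · intro t ht1 ht2
      refine ⟨N, ?_, ?_⟩
      · have := (mul_le_mul_iff_right₀ hpos).mpr ht1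
        rw [hca'] at this
        linarith
      · have := (mul_le_mul_iff_right₀ hpos).mpr ht2
        rw [hsum] at this
        linarith


lemma norm_lb {p : ℝ} (hp : 0 < p) {x : ℝ} (h1 : p/4 ≤ x) (h2 : x ≤ 3*p/4) :
    p/4 ≤ ‖(x : AddCircle p)‖ := by
  rw [AddCircle.norm_eq]
  set r : ℤ := round (p⁻¹ * x) with hr
  rcases le_or_gt r 0 with h | h
  · have hrp : (r:ℝ) * p ≤ 0 :=
      mul_nonpos_of_nonpos_of_nonneg (by exact_mod_cast h) hp.le
    calc p/4 ≤ x - r*p := by linarith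
    _ ≤ |x - r*p| := le_abs_self _
  · have h1r : (1:ℝ) ≤ (r:ℝ) := by exact_mod_cast h
    have : p ≤ (r:ℝ)*p := by nlinarith
    calc p/4 ≤ r*p - x := by linarith
    _ ≤ |x - r*p| := by rw [abs_sub_comm]; exact le_abs_self _


lemma no_limit {p : ℝ} (hp : 0 < p) (c : ℕ → ℤ) (h0 : 1 ≤ (c 0).natAbs)
    (hgrow : ∀ l, 8 * (c l).natAbs ≤ (c (l+1)).natAbs) :
    ∃ t : AddCircle p, ¬ ∃ L, Tendsto (fun l => c l • t) atTop (𝓝 L) := by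
  have hone : ∀ l, 1 ≤ (c l).natAbs := by
    intro l; induction l with
    | zero => exact h0
    | succ l ih => have := hgrow l; omega
  have hcne : ∀ l, c l ≠ 0 := by
    intro l; have := hone l
    exact fun h => by simp [h] at this
  have habs1 : ∀ l, (1:ℝ) ≤ |(c l : ℝ)| := by
    intro l
    rw [← Int.cast_abs]
    exact_mod_cast Int.one_le_abs (hcne l)
  have habsg : ∀ l, 8 * |(c l : ℝ)| ≤ |(c (l+1) : ℝ)| := by
    intro l
    rw [← Int.cast_abs, ← Int.cast_abs]
    have h : 8 * |c l| ≤ |c (l+1)| := by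
      rw [Int.abs_eq_natAbs, Int.abs_eq_natAbs]
      exact_mod_cast hgrow l
    exact_mod_cast h
  set sArc : ℕ → ℝ := fun l => if Even l then 0 else p/2 with hsArc
  have hsArc0 : ∀ l, 0 ≤ sArc l := by
    intro l; simp only [hsArc]; split_ifs
    · exact le_refl 0
    · linarith
  have hsArc2 : ∀ l, sArc l ≤ p/2 := by
    intro l; simp only [hsArc]; split_ifs <;> linarith
  set Len : ℕ → ℝ := fun l => match l with
    | 0 => 2*p
    | (l+1) => p/(4*|(c (l+1) : ℝ)|) with hLenDef
  have hLenpos : ∀ l, 0 < Len l := by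
    intro l
    match l with
    | 0 => show 0 < 2*p; linarith
    | (l+1) =>
      show 0 < p/(4*|(c (l+1) : ℝ)|)
      have := habs1 (l+1); positivity
  have hbig : ∀ l, 2*p ≤ |(c (l+1) : ℝ)| * Len l := by
    intro l
    match l with
    | 0 =>
      show 2*p ≤ |(c 1 : ℝ)| * (2*p)
      nlinarith [habs1 1]
    | (l+1) =>
      show 2*p ≤ |(c (l+2) : ℝ)| * (p/(4*|(c (l+1) : ℝ)|))
      have h1 := habs1 (l+1)
      have h2 := habsg (l+1)
      have hpos : (0:ℝ) < 4*|(c (l+1) : ℝ)| := by linarith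
      rw [← mul_div_assoc, le_div_iff₀ hpos]
      nlinarith [hp]
  have step : ∀ (l : ℕ) (a : ℝ), ∃ a', a ≤ a' ∧ a' + Len (l+1) ≤ a + Len l ∧
      ∀ t, a' ≤ t → t ≤ a' + Len (l+1) →
        ∃ N : ℤ, sArc (l+1) ≤ (c (l+1):ℝ)*t - N*p ∧ (c (l+1):ℝ)*t - N*p ≤ sArc (l+1) + p/4 := by
    intro l a
    exact step_ex hp (c (l+1)) (hcne (l+1)) a (Len l) (sArc (l+1))
      (hsArc0 (l+1)) (hsArc2 (l+1)) (hbig l)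
  obtain ⟨g, hgs⟩ : ∃ g : ℕ → ℝ, ∀ l, g (l+1) = (step l (g l)).choose :=
    ⟨fun l => Nat.rec 0 (fun l a => (step l a).choose) l, fun _ => rfl⟩
  have spec : ∀ l, g l ≤ g (l+1) ∧ g (l+1) + Len (l+1) ≤ g l + Len l ∧
      ∀ t, g (l+1) ≤ t → t ≤ g (l+1) + Len (l+1) →
        ∃ N : ℤ, sArc (l+1) ≤ (c (l+1):ℝ)*t - N*p ∧ (c (l+1):ℝ)*t - N*p ≤ sArc (l+1) + p/4 := by
    intro l
    rw [hgs l]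
    exact (step l (g l)).choose_spec
  have gmono : Monotone g := monotone_nat_of_le_succ (fun l => (spec l).1)
  have ganti : Antitone (fun l => g l + Len l) := antitone_nat_of_succ_le (fun l => (spec l).2.1)
  have hbdd : ∀ l, g l ≤ g 0 + Len 0 := by
    intro l
    calc g l ≤ g l + Len l := le_add_of_nonneg_right (hLenpos l).le
    _ ≤ g 0 + Len 0 := ganti (Nat.zero_le l)
  obtain ⟨t0, ht0⟩ : ∃ t0 : ℝ, t0 = sSup (Set.range g) := ⟨_, rfl⟩
  have hBdd : BddAbove (Set.range g) := ⟨g 0 + Len 0, by rintro _ ⟨j, rfl⟩; exact hbdd j⟩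
  have hle : ∀ l, g l ≤ t0 := fun l => ht0 ▸ le_csSup hBdd (Set.mem_range_self l)
  have hub : ∀ l, t0 ≤ g l + Len l := by
    intro l
    rw [ht0]
    apply csSup_le (Set.range_nonempty g)
    rintro _ ⟨j, rfl⟩
    rcases le_total j l with h | h
    · exact le_trans (gmono h) (le_add_of_nonneg_right (hLenpos l).le)
    · calc g j ≤ g j + Len j := le_add_of_nonneg_right (hLenpos j).le
      _ ≤ g l + Len l := ganti h
  have arc : ∀ l, ∃ N : ℤ, sArc (l+1) ≤ (c (l+1):ℝ)*t0 - N*p ∧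
      (c (l+1):ℝ)*t0 - N*p ≤ sArc (l+1) + p/4 :=
    fun l => (spec l).2.2 t0 (hle (l+1)) (hub (l+1))
  choose N hN1 hN2 using arc
  refine ⟨(t0 : AddCircle p), ?_⟩
  rintro ⟨L, hL⟩
  -- key representation
  have hrep : ∀ l, c (l+1) • ((t0 : ℝ) : AddCircle p)
      = (((c (l+1):ℝ)*t0 - N l * p : ℝ) : AddCircle p) := by
    intro l
    rw [← AddCircle.coe_zsmul p]
    have h : (c (l+1) • t0 : ℝ) = ((c (l+1):ℝ)*t0 - N l * p) + ((N l) • p : ℝ) := by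
      rw [zsmul_eq_mul, zsmul_eq_mul]; ring
    have h2 : (((N l) • p : ℝ) : AddCircle p) = 0 := by
      rw [AddCircle.coe_zsmul, AddCircle.coe_period, smul_zero]
    rw [h, AddCircle.coe_add, h2, add_zero]
  -- distance between consecutive terms
  have hfar : ∀ l, p/4 ≤ ‖(c (l+2) • ((t0 : ℝ) : AddCircle p)) - (c (l+1) • ((t0 : ℝ) : AddCircle p))‖ := by
    intro l
    rw [hrep l, hrep (l+1), ← AddCircle.coe_sub]
    set r1 := (c (l+1):ℝ)*t0 - N l * p
    set r2 := (c (l+2):ℝ)*t0 - N (l+1) * p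
    have hr1a := hN1 l; have hr1b := hN2 l
    have hr2a := hN1 (l+1); have hr2b := hN2 (l+1)
    rcases Nat.even_or_odd (l+1) with he | ho
    · have hs1 : sArc (l+1) = 0 := by simp [hsArc, he]
      have hs2 : sArc (l+2) = p/2 := by
        have : ¬ Even (l+2) := by
          rw [Nat.even_add_one]; simpa using he
        simp [hsArc, this]
      apply norm_lb hp <;> rw [hs1] at hr1a hr1b <;> rw [hs2] at hr2a hr2b <;> linarith
    · have hs1 : sArc (l+1) = p/2 := by
        have : ¬ Even (l+1) := Nat.not_even_iff_odd.mpr ho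
        simp [hsArc, this]
      have hs2 : sArc (l+2) = 0 := by
        have : Even (l+2) := by rw [Nat.even_add_one]; simpa using Nat.not_even_iff_odd.mpr ho
        simp [hsArc, this]
      rw [show r2 - r1 = -(r1 - r2) by ring, AddCircle.coe_neg, norm_neg]
      apply norm_lb hp <;> rw [hs1] at hr1a hr1b <;> rw [hs2] at hr2a hr2b <;> linarith
  -- contradiction with convergence
  have h2 : Tendsto (fun l => c (l+2) • ((t0 : ℝ) : AddCircle p)) atTop (𝓝 L) :=
    hL.comp (tendsto_add_atTop_nat 2)
  have h1 : Tendsto (fun l => c (l+1) • ((t0 : ℝ) : AddCircle p)) atTop (𝓝 L) :=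
    hL.comp (tendsto_add_atTop_nat 1)
  have hdiff : Tendsto (fun l => (c (l+2) • ((t0 : ℝ) : AddCircle p))
      - (c (l+1) • ((t0 : ℝ) : AddCircle p))) atTop (𝓝 0) := by
    have := h2.sub h1
    rwa [sub_self] at this
  have hnorm : Tendsto (fun l => ‖(c (l+2) • ((t0 : ℝ) : AddCircle p))
      - (c (l+1) • ((t0 : ℝ) : AddCircle p))‖) atTop (𝓝 0) := by
    simpa using hdiff.norm
  have hev : ∀ᶠ l in atTop, ‖(c (l+2) • ((t0 : ℝ) : AddCircle p))
      - (c (l+1) • ((t0 : ℝ) : AddCircle p))‖ < p/4 :=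
    hnorm.eventually_lt_const (by positivity)
  obtain ⟨l, hl⟩ := hev.exists
  exact absurd (hfar l) (not_le.mpr hl)


lemma affApply_comp {d : ℕ} (A B : Matrix (Fin d) (Fin d) ℤ)
    (b c x : Fin d → AddCircle (2 * Real.pi)) :
    affApply A b (affApply B c x) = affApply (A * B) (affApply A b c) x := by
  funext i
  simp only [affApply, smul_add, Finset.sum_add_distrib, Finset.smul_sum, smul_smul,
    Matrix.mul_apply, Finset.sum_smul]
  rw [Finset.sum_comm]
  abel

lemma affApply_one {d : ℕ} (x : Fin d → AddCircle (2 * Real.pi)) :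
    affApply 1 0 x = x := by
  funext i
  simp [affApply, Matrix.one_apply, ite_smul]

lemma pow_affine {d : ℕ} (A : Matrix (Fin d) (Fin d) ℤ)
    (b : Fin d → AddCircle (2 * Real.pi))
    (e : Equiv.Perm (Fin d → AddCircle (2 * Real.pi)))
    (he : ∀ x, e x = affApply A b x) :
    ∀ m : ℕ, ∃ c, ∀ x, (e ^ m) x = affApply (A ^ m) c x := by
  intro m
  induction m with
  | zero => exact ⟨0, fun x => by simp [affApply_one]⟩
  | succ m ih =>
    obtain ⟨c, hc⟩ := ih
    refine ⟨affApply A b c, fun x => ?_⟩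
    rw [pow_succ' e m, pow_succ' A m]
    have : (e * e ^ m) x = e ((e ^ m) x) := rfl
    rw [this, hc x, he, affApply_comp]

lemma zpow_affine {d : ℕ} (A : Matrix (Fin d) (Fin d) ℤ)
    (b : Fin d → AddCircle (2 * Real.pi))
    (e : Equiv.Perm (Fin d → AddCircle (2 * Real.pi)))
    (he : ∀ x, e x = affApply A b x)
    (u : (Matrix (Fin d) (Fin d) ℤ)ˣ) (hu : (u : Matrix (Fin d) (Fin d) ℤ) = A) :
    ∀ z : ℤ, ∃ c, ∀ x, (e ^ z) x = affApply ((u ^ z : (Matrix (Fin d) (Fin d) ℤ)ˣ) :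
      Matrix (Fin d) (Fin d) ℤ) c x := by
  intro z
  have hupow : ∀ m : ℕ, ((u ^ m : (Matrix (Fin d) (Fin d) ℤ)ˣ) : Matrix (Fin d) (Fin d) ℤ)
      = A ^ m := by intro m; rw [Units.val_pow_eq_pow_val, hu]
  cases z with
  | ofNat m =>
    obtain ⟨c, hc⟩ := pow_affine A b e he m
    exact ⟨c, fun x => by rw [Int.ofNat_eq_coe, zpow_natCast, zpow_natCast, hupow, hc]⟩
  | negSucc m =>
    obtain ⟨c, hc⟩ := pow_affine A b e he (m + 1)
    set M : Matrix (Fin d) (Fin d) ℤ := ((u ^ (m+1) : (Matrix (Fin d) (Fin d) ℤ)ˣ) :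
      Matrix (Fin d) (Fin d) ℤ) with hM
    set B : Matrix (Fin d) (Fin d) ℤ := (((u ^ (m+1))⁻¹ : (Matrix (Fin d) (Fin d) ℤ)ˣ) :
      Matrix (Fin d) (Fin d) ℤ) with hB
    have hMB : M * B = 1 := by
      rw [hM, hB, ← Units.val_mul]
      simp
    set c' : Fin d → AddCircle (2 * Real.pi) := affApply B 0 (-c) with hc'
    have hinv : ∀ x, (e ^ (m+1)) (affApply B c' x) = x := by
      intro x
      rw [hc, ← hupow (m+1), ← hM, affApply_comp, hMB]
      have hz : affApply M c c' = 0 := by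
        rw [hc', affApply_comp, hMB]
        funext i
        simp [affApply, Matrix.one_apply, ite_smul]
      rw [hz, affApply_one]
    refine ⟨c', fun x => ?_⟩
    rw [zpow_negSucc]
    have : ((e ^ (m+1))⁻¹) x = affApply B c' x := by
      have h2 := hinv x
      calc ((e ^ (m+1))⁻¹) x = ((e ^ (m+1))⁻¹) ((e ^ (m+1)) (affApply B c' x)) := by rw [h2]
      _ = affApply B c' x := (e ^ (m+1)).symm_apply_apply _
    rw [this, hB]
    congr 1

theorem stmt8 {d : ℕ} (A : Matrix (Fin d) (Fin d) ℤ)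
    (b : Fin d → AddCircle (2 * Real.pi))
    (hdet : A.det = 1 ∨ A.det = -1)
    (e : Equiv.Perm (Fin d → AddCircle (2 * Real.pi)))
    (he : ∀ x, e x = affApply A b x) :
    (∀ n : ℕ → ℤ, ∃ k : ℕ → ℕ, StrictMono k ∧
        ∀ x, ∃ L, Tendsto (fun i => (e ^ (n (k i))) x) atTop (𝓝 L)) ↔
      ∃ m : ℕ, 0 < m ∧ A ^ m = 1 := by
  have hp : (0:ℝ) < 2 * Real.pi := by positivity
  haveI : Fact ((0:ℝ) < 2 * Real.pi) := ⟨hp⟩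
  have hU : IsUnit A := (Matrix.isUnit_iff_isUnit_det A).mpr
    (Int.isUnit_iff.mpr (by simpa using hdet))
  obtain ⟨u, hu⟩ := hU
  constructor
  · -- tame → finite order
    intro htame
    by_contra hno
    push_neg at hno
    -- injectivity of natural powers
    have hinj : Function.Injective (fun i : ℕ => A ^ i) := by
      have key : ∀ i j : ℕ, i < j → A ^ i = A ^ j → False := by
        intro i j hij hEq
        have hA : A ^ j = A ^ i * A ^ (j - i) := by
          rw [← pow_add]; congr 1; omega
        have hu2 : IsUnit (A ^ i) := ⟨u ^ i, by rw [Units.val_pow_eq_pow_val, hu]⟩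
        have : A ^ (j - i) = 1 := by
          apply hu2.mul_left_cancel
          rw [← hA, ← hEq, mul_one]
        exact hno (j - i) (by omega) this
      intro i j hEq
      rcases lt_trichotomy i j with h | h | h
      · exact absurd hEq (by intro hh; exact key i j h hh)
      · exact h
      · exact absurd hEq (by intro hh; exact key j i h hh.symm)
    -- max entry
    set ME : ℕ → ℕ := fun m => Finset.univ.sup
      (fun pq : Fin d × Fin d => ((A ^ m) pq.1 pq.2).natAbs) with hME
    have hunb : ∀ C : ℕ, ∃ m : ℕ, C < ME m := by
      intro C
      by_contra h
      push_neg at h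
      set S : Set (Matrix (Fin d) (Fin d) ℤ) := Set.pi Set.univ
        (fun _ : Fin d => Set.pi Set.univ (fun _ : Fin d => Set.Icc (-(C:ℤ)) (C:ℤ))) with hS
      have hsub : ∀ i : ℕ, (A ^ i) ∈ S := by
        intro i pp _ qq _
        have h1 : ((A ^ i) pp qq).natAbs ≤ ME i :=
          Finset.le_sup (f := fun pq : Fin d × Fin d => ((A ^ i) pq.1 pq.2).natAbs)
            (Finset.mem_univ (pp, qq))
        have h2 := h i
        show (A ^ i) pp qq ∈ Set.Icc (-(C:ℤ)) (C:ℤ)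
        rw [Set.mem_Icc]
        omega
      have hfin : S.Finite :=
        Set.Finite.pi (fun _ => Set.Finite.pi (fun _ => Set.finite_Icc _ _))
      haveI := hfin.to_subtype
      have : Finite ℕ := Finite.of_injective
        (fun i => (⟨A ^ i, hsub i⟩ : ↥S)) (fun i j hij => hinj (congrArg Subtype.val hij))
      exact not_finite ℕ
    -- growing sequence of exponents
    have hstep : ∀ prev : ℕ, ∃ m : ℕ, 8 * prev < ME m := fun prev => hunb (8 * prev)
    obtain ⟨ν, hν0, hνs⟩ : ∃ ν : ℕ → ℕ, 0 < ME (ν 0) ∧ ∀ i, 8 * ME (ν i) < ME (ν (i+1)) :=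
      ⟨fun i => Nat.rec (hunb 0).choose (fun _ prev => (hstep (ME prev)).choose) i,
        (hunb 0).choose_spec, fun i => (hstep (ME _)).choose_spec⟩
    have hmono : Monotone (fun i => ME (ν i)) := by
      apply monotone_nat_of_le_succ
      intro i
      have := hνs i
      omega
    have hgrow8 : ∀ i j, i < j → 8 * ME (ν i) ≤ ME (ν j) := by
      intro i j hij
      have h1 := hνs i
      have h2 := hmono (show i+1 ≤ j by omega)
      simp only at h2
      omega
    -- use tameness
    obtain ⟨k, hk, hconv⟩ := htame (fun i => ((ν i : ℤ)))
    simp only [zpow_natCast] at hconv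
    choose cc hcc using pow_affine A b e he
    -- linear part converges
    have hlin : ∀ x : Fin d → AddCircle (2 * Real.pi), ∃ L, Tendsto
        (fun i => (fun j => ∑ kk, (A ^ (ν (k i))) j kk • x kk)) atTop (𝓝 L) := by
      intro x
      obtain ⟨Lx, hLx⟩ := hconv x
      obtain ⟨L0, hL0⟩ := hconv 0
      refine ⟨Lx - L0, ?_⟩
      have hsub := hLx.sub hL0
      apply hsub.congr
      intro i
      funext j
      rw [Pi.sub_apply, hcc (ν (k i)) x, hcc (ν (k i)) 0]
      simp [affApply]
    -- coefficient convergence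
    have hcoef : ∀ (pp qq : Fin d) (t : AddCircle (2 * Real.pi)), ∃ L, Tendsto
        (fun i => ((A ^ (ν (k i))) pp qq) • t) atTop (𝓝 L) := by
      intro pp qq t
      obtain ⟨L, hL⟩ := hlin (Pi.single qq t)
      refine ⟨L pp, ?_⟩
      have h2 := (tendsto_pi_nhds.mp hL) pp
      apply h2.congr
      intro i
      simp [Pi.single_apply, smul_ite, Finset.sum_ite_eq']
    -- pick argmax entries
    have hpairs : (Finset.univ : Finset (Fin d × Fin d)).Nonempty := by
      by_contra hcon
      rw [Finset.not_nonempty_iff_eq_empty] at hcon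
      have := hν0
      rw [hME] at this
      simp [hcon] at this
    have hsel : ∀ i : ℕ, ∃ pq : Fin d × Fin d,
        ME (ν (k i)) = ((A ^ (ν (k i))) pq.1 pq.2).natAbs := by
      intro i
      obtain ⟨bq, _, hbq⟩ := Finset.exists_mem_eq_sup Finset.univ hpairs
        (fun pq : Fin d × Fin d => ((A ^ (ν (k i))) pq.1 pq.2).natAbs)
      exact ⟨bq, hbq⟩
    choose pq hpq using hsel
    obtain ⟨P, hP⟩ := Finite.exists_infinite_fiber pq
    obtain ⟨ψ, hψmono, hψ0⟩ := extraction_of_frequently_atTop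
      (Nat.frequently_atTop_iff_infinite.mpr (Set.infinite_coe_iff.mp hP))
    have hψ : ∀ l, pq (ψ l) = P := fun l => hψ0 l
    set co : ℕ → ℤ := fun l => (A ^ (ν (k (ψ l)))) P.1 P.2 with hco
    have hcoME : ∀ l, (co l).natAbs = ME (ν (k (ψ l))) := by
      intro l
      have := hpq (ψ l)
      rw [hψ l] at this
      exact this.symm
    have h0 : 1 ≤ (co 0).natAbs := by
      rw [hcoME 0]
      have := hmono (Nat.zero_le (k (ψ 0)))
      simp only at this
      omega
    have hgrw : ∀ l, 8 * (co l).natAbs ≤ (co (l+1)).natAbs := by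
      intro l
      rw [hcoME l, hcoME (l+1)]
      exact hgrow8 _ _ (hk (hψmono (Nat.lt_succ_self l)))
    obtain ⟨t, hnl⟩ := no_limit hp co h0 hgrw
    apply hnl
    obtain ⟨L, hL⟩ := hcoef P.1 P.2 t
    exact ⟨L, hL.comp hψmono.tendsto_atTop⟩
  · -- finite order → tame
    rintro ⟨m, hm, hAm⟩
    intro n
    have hum : u ^ m = 1 := Units.ext (by
      rw [Units.val_pow_eq_pow_val, hu, hAm, Units.val_one])
    choose cf hcf using zpow_affine A b e he u hu
    -- reduce exponents mod m
    have hred : ∀ z : ℤ, ∃ r : Fin m, u ^ z = u ^ (r : ℕ) := by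
      intro z
      have hmz : (m : ℤ) ≠ 0 := by exact_mod_cast hm.ne'
      have hnn : 0 ≤ z % m := Int.emod_nonneg z hmz
      have hlt : z % m < m := Int.emod_lt_of_pos z (by exact_mod_cast hm)
      refine ⟨⟨(z % m).toNat, by omega⟩, ?_⟩
      have hz : z = m * (z / m) + z % m := (Int.mul_ediv_add_emod z m).symm
      calc u ^ z = u ^ ((m : ℤ) * (z / m) + z % m) := by rw [← hz]
      _ = (u ^ (m : ℤ)) ^ (z / m) * u ^ (z % m) := by rw [zpow_add, zpow_mul]
      _ = u ^ (z % m) := by rw [zpow_natCast, hum, one_zpow, one_mul]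
      _ = u ^ (((z % m).toNat : ℤ)) := by rw [Int.toNat_of_nonneg hnn]
      _ = u ^ ((⟨(z % m).toNat, by omega⟩ : Fin m) : ℕ) := by rw [zpow_natCast]
    choose r hr using fun i => hred (n i)
    -- pigeonhole on r
    obtain ⟨R, hR⟩ := Finite.exists_infinite_fiber r
    obtain ⟨ψ1, hψ1mono, hψ10⟩ := extraction_of_frequently_atTop
      (Nat.frequently_atTop_iff_infinite.mpr (Set.infinite_coe_iff.mp hR))
    have hψ1 : ∀ l, r (ψ1 l) = R := fun l => hψ10 l
    -- compactness
    obtain ⟨Lc, φ2, hφ2mono, hφ2⟩ := CompactSpace.tendsto_subseq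
      (fun i => cf (n (ψ1 i)))
    refine ⟨ψ1 ∘ φ2, hψ1mono.comp hφ2mono, ?_⟩
    intro x
    set M : Matrix (Fin d) (Fin d) ℤ := ((u ^ (R : ℕ) : (Matrix (Fin d) (Fin d) ℤ)ˣ) :
      Matrix (Fin d) (Fin d) ℤ) with hMdef
    refine ⟨fun j => (∑ kk, M j kk • x kk) + Lc j, ?_⟩
    rw [tendsto_pi_nhds]
    intro j
    have heq : ∀ i, (e ^ (n ((ψ1 ∘ φ2) i))) x j
        = (∑ kk, M j kk • x kk) + cf (n (ψ1 (φ2 i))) j := by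
      intro i
      have h1 := hcf (n (ψ1 (φ2 i))) x
      have h2 : u ^ (n (ψ1 (φ2 i))) = u ^ (R : ℕ) := by
        rw [hr (ψ1 (φ2 i)), hψ1 (φ2 i)]
      rw [show (ψ1 ∘ φ2) i = ψ1 (φ2 i) from rfl, h1, h2]
      rfl
    have hTc : Tendsto (fun i => cf (n (ψ1 (φ2 i))) j) atTop (𝓝 (Lc j)) :=
      (tendsto_pi_nhds.mp hφ2) j
    have := hTc.const_add (∑ kk, M j kk • x kk)
    apply this.congr
    intro i
    exact (heq i).symm
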